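/- Let p ∈ ℂ[x, y] be a polynomial satisfying y·(∂p/∂x) + ∂p/∂y = 0. Then there exists a single-variable polynomial q ∈ ℂ[T] such that p(x, y) = q(y² − 2x). -/

import Mathlib

open MvPolynomial

noncomputable def fsub : Fin 2 → MvPolynomial (Fin 2) ℂ :=
  ![C (2⁻¹ : ℂ) * ((X 1) ^ 2 - X 0), X 1]

noncomputable def gsub : Fin 2 → MvPolynomial (Fin 2) ℂ :=
  ![(X 1) ^ 2 - 2 * X 0, X 1]

lemma two_half : (C (2⁻¹ : ℂ) : MvPolynomial (Fin 2) ℂ) * 2 = 1 := by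
  rw [show (2 : MvPolynomial (Fin 2) ℂ) = C 2 from (map_ofNat C 2).symm, ← C_mul]
  norm_num

lemma chain_rule (p : MvPolynomial (Fin 2) ℂ) :
    pderiv 1 (aeval fsub p) = aeval fsub (X 1 * pderiv 0 p + pderiv 1 p) := by
  induction p using MvPolynomial.induction_on with
  | C a => simp
  | add p q hp hq =>
      simp only [map_add, hp, hq, mul_add]; ring
  | mul_X p j hp =>
      have key : pderiv 1 (fsub j) = aeval fsub (X 1 * pderiv 0 (X j : MvPolynomial (Fin 2) ℂ) + pderiv 1 (X j : MvPolynomial (Fin 2) ℂ)) := by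
        fin_cases j
        · simp [fsub, MvPolynomial.algebraMap_eq]
          linear_combination (X 1 : MvPolynomial (Fin 2) ℂ) * two_half
        · simp [fsub]
      have expand : X 1 * pderiv 0 (p * X j) + pderiv 1 (p * X j)
          = (X 1 * pderiv 0 p + pderiv 1 p) * X j
            + p * (X 1 * pderiv 0 (X j) + pderiv 1 (X j)) := by
        simp only [pderiv_mul]; ring
      rw [map_mul, aeval_X, pderiv_mul, hp, key, expand]
      simp only [map_add, map_mul, aeval_X]

lemma g_comp_f (p : MvPolynomial (Fin 2) ℂ) : aeval gsub (aeval fsub p) = p := by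
  have key : (aeval gsub).comp (aeval fsub) = AlgHom.id ℂ (MvPolynomial (Fin 2) ℂ) := by
    apply MvPolynomial.algHom_ext
    intro i
    fin_cases i
    · simp only [AlgHom.comp_apply, aeval_X, AlgHom.id_apply, fsub, gsub, Fin.isValue,
        Fin.zero_eta, Matrix.cons_val_zero, map_mul, map_sub, map_pow, aeval_C, algHom_C,
        Matrix.cons_val_one, Matrix.head_cons, MvPolynomial.algebraMap_eq]
      linear_combination (X 0 : MvPolynomial (Fin 2) ℂ) * two_half
    · simp [fsub, gsub]
  calc aeval gsub (aeval fsub p) = ((aeval gsub).comp (aeval fsub)) p := rfl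
    _ = p := by rw [key]; rfl

lemma not_mem_vars_of_pderiv_eq_zero {i : Fin 2} {P : MvPolynomial (Fin 2) ℂ}
    (h : pderiv i P = 0) : i ∉ P.vars := by
  intro hv
  rw [mem_vars] at hv
  obtain ⟨m, hm, him⟩ := hv
  have hmi : m i ≠ 0 := Finsupp.mem_support_iff.mp him
  have hc : coeff (m - Finsupp.single i 1) (pderiv i P) = coeff m P * (m i : ℂ) := by
    conv_lhs => rw [P.as_sum, map_sum]
    rw [coeff_sum]
    rw [Finset.sum_eq_single_of_mem m hm]
    · rw [pderiv_monomial, coeff_monomial, if_pos rfl]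
    · intro b hb hbm
      rw [pderiv_monomial, coeff_monomial]
      split_ifs with he
      · rcases Nat.eq_zero_or_pos (b i) with h0 | h0
        · simp [h0]
        · exfalso; apply hbm
          ext j
          by_cases hj : j = i
          · subst hj
            have h1 := congrArg (fun f => f j) he
            simp only [Finsupp.coe_tsub, Pi.sub_apply, Finsupp.single_eq_same] at h1
            omega
          · have h1 := congrArg (fun f => f j) he
            simpa [Finsupp.single_eq_of_ne' (Ne.symm hj)] using h1
      · rfl
  rw [h, coeff_zero] at hc
  rcases mul_eq_zero.mp hc.symm with h1 | h2
  · exact mem_support_iff.mp hm h1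
  · exact hmi (Nat.cast_eq_zero.mp h2)

theorem kernel_of_derivation_y_dx_plus_dy (p : MvPolynomial (Fin 2) ℂ)
    (h : X 1 * pderiv 0 p + pderiv 1 p = 0) :
    ∃ q : Polynomial ℂ,
      p = Polynomial.aeval ((X 1 : MvPolynomial (Fin 2) ℂ) ^ 2 - 2 * X 0) q := by
  set P := aeval fsub p with hP
  have hd : pderiv 1 P = 0 := by rw [hP, chain_rule, h, map_zero]
  have hv : (1 : Fin 2) ∉ P.vars := not_mem_vars_of_pderiv_eq_zero hd
  have hsupp : P ∈ supported ℂ ({0} : Set (Fin 2)) := by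
    rw [mem_supported]
    intro j hj
    have : j = 0 ∨ j = 1 := by omega
    rcases this with rfl | rfl
    · exact rfl
    · exact absurd hj hv
  rw [supported_eq_adjoin_X, Set.image_singleton,
    Algebra.adjoin_singleton_eq_range_aeval] at hsupp
  obtain ⟨q, hq⟩ := hsupp
  simp only [AlgHom.toRingHom_eq_coe, RingHom.coe_coe] at hq
  refine ⟨q, ?_⟩
  have h1 : p = aeval gsub P := (g_comp_f p).symm
  rw [h1, ← hq, ← Polynomial.aeval_algHom_apply]
  congr 1
  simp [gsub]
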